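/- Let D = diag(ε, ε, εω) with ε = e^{4πi/9}. Then X = DVD⁻¹, D⁻¹CD = C, D⁻¹ED = CE, and D³ = ω²·𝟙. In particular D normalizes Δ(27) = ⟨C,E⟩. -/

import Mathlib

open Matrix

noncomputable def ω : ℂ := Complex.exp (2 * Real.pi * Complex.I / 3)

noncomputable def Cmat : Matrix (Fin 3) (Fin 3) ℂ := !![1,0,0; 0,ω,0; 0,0,ω^2]

noncomputable def Emat : Matrix (Fin 3) (Fin 3) ℂ := !![0,1,0; 0,0,1; 1,0,0]

noncomputable def Vmat : Matrix (Fin 3) (Fin 3) ℂ :=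
  (1 / ((Real.sqrt 3 : ℂ) * Complex.I)) • !![1,1,1; 1,ω,ω^2; 1,ω^2,ω]

noncomputable def Xmat : Matrix (Fin 3) (Fin 3) ℂ :=
  (1 / ((Real.sqrt 3 : ℂ) * Complex.I)) • !![1,1,ω^2; 1,ω,ω; ω,1,ω]

noncomputable def ε : ℂ := Complex.exp (4 * Real.pi * Complex.I / 9)

noncomputable def Dmat : Matrix (Fin 3) (Fin 3) ℂ := !![ε,0,0; 0,ε,0; 0,0,ε*ω]

lemma hω3 : ω ^ 3 = 1 := by
  rw [ω, ← Complex.exp_nat_mul]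
  rw [show ((3:ℕ):ℂ) * (2 * Real.pi * Complex.I / 3) = 2 * Real.pi * Complex.I by push_cast; ring]
  exact Complex.exp_two_pi_mul_I

lemma hε3 : ε ^ 3 = ω ^ 2 := by
  rw [ε, ω, ← Complex.exp_nat_mul, ← Complex.exp_nat_mul]
  congr 1
  push_cast; ring

lemma hεne : ε ≠ 0 := Complex.exp_ne_zero _

lemma hωne : ω ≠ 0 := Complex.exp_ne_zero _

lemma hdet : IsUnit Dmat.det := by
  have : Dmat.det = ε ^ 3 * ω := by
    simp [Dmat, Matrix.det_fin_three]; ring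
  rw [this]
  exact (IsUnit.pow 3 (Ne.isUnit hεne)).mul (Ne.isUnit hωne)

noncomputable instance : Invertible Dmat := Matrix.invertibleOfIsUnitDet _ hdet

lemma conj_mem {G : Type*} [Group G] {S : Set G} {g : G}
    (h : ∀ s ∈ S, g * s * g⁻¹ ∈ Subgroup.closure S) :
    ∀ x ∈ Subgroup.closure S, g * x * g⁻¹ ∈ Subgroup.closure S := by
  intro x hx
  induction hx using Subgroup.closure_induction with
  | mem s hs => exact h s hs
  | one => simpa using Subgroup.one_mem _
  | mul x y hx hy ihx ihy =>
      have e : g * (x * y) * g⁻¹ = (g * x * g⁻¹) * (g * y * g⁻¹) := by group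
      rw [e]; exact Subgroup.mul_mem _ ihx ihy
  | inv x hx ih =>
      have e : g * x⁻¹ * g⁻¹ = (g * x * g⁻¹)⁻¹ := by group
      rw [e]; exact Subgroup.inv_mem _ ih

lemma key1 : Xmat * Dmat = Dmat * Vmat := by
  have h3 := hω3
  ext i j
  fin_cases i <;> fin_cases j <;>
    simp [Xmat, Dmat, Vmat, Matrix.mul_apply, Fin.sum_univ_succ] <;>
    (try ring1) <;>
    first
      | linear_combination Complex.I * ((Real.sqrt 3 : ℂ))⁻¹ * ε * h3
      | linear_combination (-(Complex.I * ((Real.sqrt 3 : ℂ))⁻¹ * ε)) * h3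

lemma key2 : Cmat * Dmat = Dmat * Cmat := by
  have h3 := hω3
  ext i j
  fin_cases i <;> fin_cases j <;>
    simp [Cmat, Dmat, Matrix.mul_apply, Fin.sum_univ_succ] <;>
    first
      | ring1
      | linear_combination (-ε) * h3
      | linear_combination ε * h3

lemma key3 : Emat * Dmat = Dmat * (Cmat * Emat) := by
  have h3 := hω3
  ext i j
  fin_cases i <;> fin_cases j <;>
    simp [Emat, Cmat, Dmat, Matrix.mul_apply, Fin.sum_univ_succ] <;>
    first
      | ring1
      | linear_combination (-ε) * h3
      | linear_combination ε * h3

lemma key4 : Dmat ^ 3 = ω ^ 2 • (1 : Matrix (Fin 3) (Fin 3) ℂ) := by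
  have h3 := hω3
  have he3 := hε3
  rw [pow_succ, pow_succ, pow_one]
  ext i j
  fin_cases i <;> fin_cases j <;>
    simp [Dmat, Matrix.mul_apply, Fin.sum_univ_succ] <;>
    first
      | ring1
      | linear_combination he3
      | linear_combination he3 + ε ^ 3 * h3
      | linear_combination he3 - ε ^ 3 * h3
      | linear_combination ω ^ 3 * he3 + ω ^ 2 * h3
      | linear_combination he3 + ω ^ 2 * h3

/-- X = DVD⁻¹, D⁻¹CD = C, D⁻¹ED = CE, D³ = ω²𝟙; D normalizes Δ(27) = ⟨C,E⟩. -/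
theorem stmt_17 :
    Xmat = Dmat * Vmat * Dmat⁻¹ ∧
    Dmat⁻¹ * Cmat * Dmat = Cmat ∧
    Dmat⁻¹ * Emat * Dmat = Cmat * Emat ∧
    Dmat ^ 3 = ω ^ 2 • (1 : Matrix (Fin 3) (Fin 3) ℂ) ∧
    ∀ c e d : GL (Fin 3) ℂ, (c : Matrix (Fin 3) (Fin 3) ℂ) = Cmat →
      (e : Matrix (Fin 3) (Fin 3) ℂ) = Emat →
      (d : Matrix (Fin 3) (Fin 3) ℂ) = Dmat →
      d ∈ Subgroup.normalizer (↑(Subgroup.closure {c, e}) : Set (GL (Fin 3) ℂ)) := by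
  have g1 : Xmat = Dmat * Vmat * Dmat⁻¹ :=
    ((Matrix.mul_inv_eq_iff_eq_mul_of_invertible Dmat (Dmat * Vmat) Xmat).mpr key1.symm).symm
  have g2 : Dmat⁻¹ * Cmat * Dmat = Cmat := by
    rw [mul_assoc, Matrix.inv_mul_eq_iff_eq_mul_of_invertible]
    exact key2
  have g3 : Dmat⁻¹ * Emat * Dmat = Cmat * Emat := by
    rw [mul_assoc, Matrix.inv_mul_eq_iff_eq_mul_of_invertible]
    exact key3
  refine ⟨g1, g2, g3, key4, ?_⟩
  intro c e d hc he hd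
  set H := Subgroup.closure {c, e} with hH
  have hcH : c ∈ H := Subgroup.subset_closure (by simp)
  have heH : e ∈ H := Subgroup.subset_closure (by simp)
  -- GL-level identities
  have hdc : d⁻¹ * c * d = c := by
    apply Units.ext
    simpa [Units.val_mul, Matrix.coe_units_inv, hc, hd] using g2
  have hde : d⁻¹ * e * d = c * e := by
    apply Units.ext
    simpa [Units.val_mul, Matrix.coe_units_inv, hc, he, hd] using g3
  have hdc' : d * c * d⁻¹ = c := by
    conv_lhs => rw [← hdc]
    group
  have hde' : d * e * d⁻¹ = c⁻¹ * e := by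
    apply mul_left_cancel (a := c)
    calc c * (d * e * d⁻¹) = (d * c * d⁻¹) * (d * e * d⁻¹) := by rw [hdc']
      _ = d * (c * e) * d⁻¹ := by group
      _ = d * (d⁻¹ * e * d) * d⁻¹ := by rw [hde]
      _ = e := by group
      _ = c * (c⁻¹ * e) := by group
  have fwd : ∀ x ∈ H, d * x * d⁻¹ ∈ H := by
    apply conj_mem
    intro s hs
    rcases hs with rfl | hs
    · rw [hdc']; exact hcH
    · rcases hs with rfl
      rw [hde']; exact Subgroup.mul_mem _ (Subgroup.inv_mem _ hcH) heH
  have bwd : ∀ x ∈ H, d⁻¹ * x * d ∈ H := by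
    intro x hx
    have := conj_mem (S := ({c, e} : Set (GL (Fin 3) ℂ))) (g := d⁻¹) ?_ x hx
    · simpa using this
    · intro s hs
      rw [inv_inv]
      rcases hs with rfl | hs
      · rw [hdc]; exact hcH
      · rcases hs with rfl
        rw [hde]
        exact Subgroup.mul_mem _ hcH heH
  rw [Subgroup.mem_normalizer_iff]
  intro h
  constructor
  · exact fun hh => fwd h hh
  · intro hh
    have := bwd _ hh
    simpa [mul_assoc] using this
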